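/- For all real numbers a and b, ∫₀^1 e^{a sin(b + 2πy)} dy ≤ e^{a²/4}. -/

import Mathlib

open Real MeasureTheory Function intervalIntegral

lemma prodP (k : ℕ) : ∏ i ∈ Finset.range k, ((2*(i:ℝ)+1)/(2*i+2))
    = ((2*k).factorial : ℝ) / (4^k * ((k.factorial : ℝ))^2) := by
  induction k with
  | zero => simp
  | succ k ih =>
    rw [Finset.prod_range_succ, ih]
    have h1 : ((k.factorial : ℝ)) ≠ 0 := Nat.cast_ne_zero.2 k.factorial_ne_zero
    have h2 : (((2*k).factorial : ℝ)) ≠ 0 := Nat.cast_ne_zero.2 (2*k).factorial_ne_zero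
    have e1 : 2 * (k+1) = (2*k+1) + 1 := by ring
    rw [e1, Nat.factorial_succ, Nat.factorial_succ, Nat.factorial_succ]
    push_cast
    field_simp
    ring

lemma sin_int_even (k : ℕ) :
    ∫ θ in (-π)..π, Real.sin θ ^ (2*k)
      = 2 * (π * ∏ i ∈ Finset.range k, (2*(i:ℝ)+1)/(2*i+2)) := by
  have hc : ∀ (u v : ℝ), IntervalIntegrable (fun θ => Real.sin θ ^ (2*k)) volume u v :=
    fun u v => (Real.continuous_sin.pow _).intervalIntegrable u v
  have hsplit := intervalIntegral.integral_add_adjacent_intervals (hc (-π) 0) (hc 0 π)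
  have h0 : ∫ θ in (-π)..(0:ℝ), Real.sin θ ^ (2*k) = ∫ θ in (0:ℝ)..π, Real.sin θ ^ (2*k) := by
    have := intervalIntegral.integral_comp_neg (a := 0) (b := π) (fun θ => Real.sin θ ^ (2*k))
    simp only [Real.sin_neg, (even_two_mul k).neg_pow, neg_zero] at this
    exact this.symm
  rw [← hsplit, h0, integral_sin_pow_even]
  ring

lemma sin_int_odd (k : ℕ) :
    ∫ θ in (-π)..π, Real.sin θ ^ (2*k+1) = 0 := by
  have hc : ∀ (u v : ℝ), IntervalIntegrable (fun θ => Real.sin θ ^ (2*k+1)) volume u v :=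
    fun u v => (Real.continuous_sin.pow _).intervalIntegrable u v
  have hsplit := intervalIntegral.integral_add_adjacent_intervals (hc (-π) 0) (hc 0 π)
  have h0 : ∫ θ in (-π)..(0:ℝ), Real.sin θ ^ (2*k+1) = - ∫ θ in (0:ℝ)..π, Real.sin θ ^ (2*k+1) := by
    have := intervalIntegral.integral_comp_neg (a := 0) (b := π) (fun θ => Real.sin θ ^ (2*k+1))
    simp only [Real.sin_neg, (odd_two_mul_add_one k).neg_pow, neg_zero,
      intervalIntegral.integral_neg] at this
    linarith [this]
  rw [← hsplit, h0]
  ring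

lemma term_eval (a : ℝ) (n : ℕ) :
    ∫ θ in (-π)..π, (a * Real.sin θ)^n / n.factorial
      = a^n / n.factorial * ∫ θ in (-π)..π, Real.sin θ ^ n := by
  have h : ∀ θ : ℝ, (a * Real.sin θ)^n / n.factorial
      = (a^n/n.factorial) * Real.sin θ ^ n := by
    intro θ; rw [mul_pow]; ring
  simp_rw [h]
  exact intervalIntegral.integral_const_mul _ _

lemma key (a : ℝ) :
    HasSum (fun n : ℕ => ∫ θ in (-π)..π, (a * Real.sin θ)^n / n.factorial)
      (∫ θ in (-π)..π, Real.exp (a * Real.sin θ)) := by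
  have hle : (-π : ℝ) ≤ π := by linarith [Real.pi_pos]
  simp only [intervalIntegral.integral_of_le hle]
  refine MeasureTheory.hasSum_integral_of_dominated_convergence
    (bound := fun n _ => |a|^n / n.factorial)
    (fun n => Continuous.aestronglyMeasurable (by continuity))
    (fun n => ae_of_all _ fun θ => ?_)
    (ae_of_all _ fun θ => Real.summable_pow_div_factorial |a|)
    ?_
    (ae_of_all _ fun θ => ?_)
  · rw [Real.norm_eq_abs, abs_div, abs_pow, Nat.abs_cast]
    have hfac : (0:ℝ) < n.factorial := Nat.cast_pos.2 n.factorial_pos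
    have hab : |a * Real.sin θ| ≤ |a| := by
      rw [abs_mul]
      exact mul_le_of_le_one_right (abs_nonneg a) (Real.abs_sin_le_one θ)
    exact div_le_div_of_nonneg_right (pow_le_pow_left₀ (abs_nonneg _) hab n) hfac.le
  · exact (MeasureTheory.integrableOn_const (by
      rw [Real.volume_Ioc]; exact ENNReal.ofReal_ne_top))
  · have := NormedSpace.expSeries_div_hasSum_exp (a * Real.sin θ)
    rwa [← Real.exp_eq_exp_ℝ] at this

theorem stmt9 (a b : ℝ) :
    ∫ y in (0 : ℝ)..1, Real.exp (a * Real.sin (b + 2 * Real.pi * y)) ≤ Real.exp (a ^ 2 / 4) := by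
  have hπ := Real.pi_pos
  have h2π : (0:ℝ) < 2*π := by linarith
  -- substitution
  have hsub := intervalIntegral.mul_integral_comp_add_mul
    (a := 0) (b := 1) (f := fun θ => Real.exp (a * Real.sin θ)) (2*π) b
  -- periodicity
  have hper : Function.Periodic (fun θ => Real.exp (a * Real.sin θ)) (2*π) := by
    have := Real.sin_periodic.comp (fun s => Real.exp (a * s))
    exact this
  have hper_eq : ∫ θ in b..(b + 2*π), Real.exp (a * Real.sin θ)
      = ∫ θ in (-π)..π, Real.exp (a * Real.sin θ) := by
    have h := hper.intervalIntegral_add_eq b (-π)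
    have e : -π + 2*π = π := by ring
    rwa [e] at h
  -- the series comparison
  have hkey := key a
  have hexp : HasSum (fun k : ℕ => (2*π) * ((a^2/4)^k / k.factorial))
      ((2*π) * Real.exp (a^2/4)) := by
    have := NormedSpace.expSeries_div_hasSum_exp (a^2/4)
    rw [← Real.exp_eq_exp_ℝ] at this
    exact this.mul_left _
  set e : ℕ → ℝ := fun n =>
    if Even n then (2*π) * ((a^2/4)^(n/2) / (n/2).factorial) else 0 with he
  have hinj : Function.Injective (fun k : ℕ => 2*k) := fun x y h => by dsimp at h; omega
  have hE : HasSum e ((2*π) * Real.exp (a^2/4)) := by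
    rw [← Function.Injective.hasSum_iff hinj ?_]
    · have : (e ∘ fun k : ℕ => 2*k) = fun k : ℕ => (2*π) * ((a^2/4)^k / k.factorial) := by
        funext k
        simp [he, Function.comp, even_two_mul, Nat.mul_div_cancel_left k (by norm_num : 0 < 2)]
      rw [this]
      exact hexp
    · intro n hn
      simp only [Set.mem_range, not_exists] at hn
      have hodd : ¬ Even n := by
        rintro ⟨r, hr⟩
        exact hn r (by omega)
      simp [he, hodd]
  have hterm : ∀ n : ℕ,
      (∫ θ in (-π)..π, (a * Real.sin θ)^n / n.factorial) ≤ e n := by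
    intro n
    rw [term_eval]
    rcases Nat.even_or_odd n with ⟨k, hk⟩ | ⟨k, hk⟩
    · have hn2 : n = 2*k := by omega
      subst hn2
      rw [sin_int_even, prodP]
      have hdiv : (2*k)/2 = k := by omega
      simp only [he, even_two_mul, if_pos, hdiv]
      have hA : a^(2*k) = (a^2)^k := by rw [← pow_mul]
      have hf2k : (0:ℝ) < (2*k).factorial := Nat.cast_pos.2 (2*k).factorial_pos
      have hfk : (1:ℝ) ≤ k.factorial := by exact_mod_cast k.factorial_pos
      have hfkpos : (0:ℝ) < k.factorial := by linarith
      have lhs_eq : a^(2*k) / (2*k).factorial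
            * (2 * (π * (((2*k).factorial : ℝ) / (4^k * ((k.factorial:ℝ))^2))))
          = 2*π * ((a^2)^k / (4^k * ((k.factorial:ℝ))^2)) := by
        rw [hA]; field_simp
      rw [lhs_eq]
      have rhs_eq : (2*π) * ((a^2/4)^(k:ℕ) / (k.factorial:ℝ))
          = 2*π * ((a^2)^k / (4^k * (k.factorial:ℝ))) := by
        rw [div_pow]; field_simp
      rw [rhs_eq]
      have hnum : (0:ℝ) ≤ (a^2)^k := by positivity
      gcongr
      nlinarith
    · have hn2 : n = 2*k+1 := by omega
      subst hn2
      rw [sin_int_odd, mul_zero]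
      have hodd : ¬ Even (2*k+1) := by simp [Nat.even_add_one, Nat.even_iff]
      simp [he, hodd]
  have hle := hasSum_le hterm hkey hE
  -- assemble
  have hfinal : (2*π) * ∫ y in (0:ℝ)..1, Real.exp (a * Real.sin (b + 2 * π * y))
      = ∫ θ in (-π)..π, Real.exp (a * Real.sin θ) := by
    rw [hsub]
    norm_num
    exact hper_eq
  have : (2*π) * (∫ y in (0:ℝ)..1, Real.exp (a * Real.sin (b + 2 * π * y)))
      ≤ (2*π) * Real.exp (a^2/4) := by
    rw [hfinal]; exact hle
  exact le_of_mul_le_mul_left this h2π
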